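/- Let S = S_1 ⊕ S_2 ⊕ ⋯ ⊕ S_k be a block-diagonal complex matrix of size n = n_1 + ⋯ + n_k, where each S_j ∈ ℂ^{n_j×n_j} has λ_j as its only eigenvalue and λ_1, …, λ_k are pairwise distinct complex numbers. Then a matrix Q ∈ O_n(ℂ) satisfies QᵀSQ = S if and only if Q = Q_1 ⊕ Q_2 ⊕ ⋯ ⊕ Q_k for some matrices Q_j ∈ O_{n_j}(ℂ) with Q_jᵀ S_j Q_j = S_j for every j. In particular the isotropy group Σ_S is isomorphic to the direct product of the isotropy groups Σ_{S_j}. -/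

import Mathlib

open Matrix

section Aux

open Polynomial

lemma charpolyEvalSpec' {m : ℕ} (A : Matrix (Fin m) (Fin m) ℂ) (r : ℂ) :
    (Matrix.charpoly A).eval r = Matrix.det (r • (1 : Matrix (Fin m) (Fin m) ℂ) - A) := by
  rw [Matrix.charpoly, ← coe_evalRingHom, RingHom.map_det]
  congr 1
  ext i j
  simp [Matrix.charmatrix_apply, Matrix.diagonal_apply, Matrix.one_apply, apply_ite,
    Matrix.sub_apply, Matrix.smul_apply]

lemma specRoot' {m : ℕ} (A : Matrix (Fin m) (Fin m) ℂ) (r : ℂ) :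
    r ∈ spectrum ℂ A ↔ (Matrix.charpoly A).eval r = 0 := by
  rw [spectrum.mem_iff, Matrix.isUnit_iff_isUnit_det, isUnit_iff_ne_zero, not_ne_iff,
    charpolyEvalSpec', Algebra.algebraMap_eq_smul_one]

lemma nilpOfSpec' {m : ℕ} (A : Matrix (Fin m) (Fin m) ℂ) (μ : ℂ)
    (h : spectrum ℂ A = {μ}) : (A - μ • 1) ^ m = 0 := by
  rcases Nat.eq_zero_or_pos m with hm | hm
  · subst hm
    ext i j
    exact i.elim0
  have : NeZero m := ⟨hm.ne'⟩
  have hmono := A.charpoly_monic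
  have hsplit : (Matrix.charpoly A).Splits := IsAlgClosed.splits _
  have hcard : (Matrix.charpoly A).roots.card = m := by
    rw [splits_iff_card_roots.mp hsplit, Matrix.charpoly_natDegree_eq_dim, Fintype.card_fin]
  have hall : ∀ r ∈ (Matrix.charpoly A).roots, r = μ := by
    intro r hr
    have : r ∈ spectrum ℂ A := (specRoot' A r).mpr (isRoot_of_mem_roots hr)
    rw [h] at this
    exact this
  have hrep : (Matrix.charpoly A).roots = Multiset.replicate m μ :=
    Multiset.eq_replicate.mpr ⟨hcard, hall⟩
  have hchar : Matrix.charpoly A = (X - C μ) ^ m := by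
    rw [hsplit.eq_prod_roots_of_monic hmono, hrep, Multiset.map_replicate,
      Multiset.prod_replicate]
  have h0 := A.aeval_self_charpoly
  rw [hchar, map_pow, map_sub, aeval_X, aeval_C, Algebra.algebraMap_eq_smul_one] at h0
  exact h0

lemma sylvester' {p q : ℕ} (A : Matrix (Fin p) (Fin p) ℂ) (B : Matrix (Fin q) (Fin q) ℂ)
    (lA lB : ℂ) (hne : lA ≠ lB)
    (hA : spectrum ℂ A = {lA}) (hB : spectrum ℂ B = {lB})
    (Y : Matrix (Fin p) (Fin q) ℂ) (hY : A * Y = Y * B) : Y = 0 := by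
  set N := A - lA • 1 with hNdef
  set M := B - lB • 1 with hMdef
  have hN : N ^ p = 0 := nilpOfSpec' A lA hA
  have hM : M ^ q = 0 := nilpOfSpec' B lB hB
  let L : Module.End ℂ (Matrix (Fin p) (Fin q) ℂ) :=
    { toFun := fun Z => N * Z
      map_add' := fun Z W => Matrix.mul_add N Z W
      map_smul' := fun c Z => (Matrix.mul_smul N c Z) }
  let R : Module.End ℂ (Matrix (Fin p) (Fin q) ℂ) :=
    { toFun := fun Z => Z * M
      map_add' := fun Z W => Matrix.add_mul Z W M
      map_smul' := fun c Z => Matrix.smul_mul c Z M }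
  have hLpow : ∀ (t : ℕ) (Z : Matrix (Fin p) (Fin q) ℂ), (L ^ t) Z = N ^ t * Z := by
    intro t
    induction t with
    | zero => intro Z; simp
    | succ t ih =>
      intro Z
      rw [pow_succ', Module.End.mul_apply, ih]
      show N * (N ^ t * Z) = N ^ (t + 1) * Z
      rw [← Matrix.mul_assoc, ← pow_succ']
  have hRpow : ∀ (t : ℕ) (Z : Matrix (Fin p) (Fin q) ℂ), (R ^ t) Z = Z * M ^ t := by
    intro t
    induction t with
    | zero => intro Z; simp
    | succ t ih =>
      intro Z
      rw [pow_succ, Module.End.mul_apply, ih]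
      show (Z * M) * M ^ t = Z * M ^ (t + 1)
      rw [Matrix.mul_assoc, ← pow_succ']
  have hcomm : Commute L R :=
    LinearMap.ext fun Z => (Matrix.mul_assoc N Z M).symm
  have hLnil : IsNilpotent L := ⟨p, by ext Z; simp [hLpow, hN]⟩
  have hRnil : IsNilpotent R := ⟨q, by ext Z; simp [hRpow, hM]⟩
  obtain ⟨t, ht⟩ := hcomm.isNilpotent_sub hLnil hRnil
  have heig : (L - R) Y = (lB - lA) • Y := by
    show N * Y - Y * M = (lB - lA) • Y
    rw [hNdef, hMdef, Matrix.sub_mul, Matrix.mul_sub, Matrix.smul_mul, Matrix.mul_smul,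
      Matrix.one_mul, Matrix.mul_one, hY, sub_smul]
    abel
  have hiter : ∀ s : ℕ, ((L - R) ^ s) Y = (lB - lA) ^ s • Y := by
    intro s
    induction s with
    | zero => simp
    | succ s ih =>
      rw [pow_succ', Module.End.mul_apply, ih, LinearMap.map_smul, heig, smul_smul, pow_succ,
        mul_comm ((lB - lA) ^ s)]
  have h0 : (lB - lA) ^ t • Y = 0 := by rw [← hiter, ht, LinearMap.zero_apply]
  rcases smul_eq_zero.mp h0 with h | h
  · exact absurd h (pow_ne_zero t (sub_ne_zero.mpr (Ne.symm hne)))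
  · exact h

variable {k : ℕ} {n : Fin k → ℕ}

/-- Extract the diagonal blocks of a sigma-indexed matrix. -/
def diagBlocks' (Q : Matrix (Σ j, Fin (n j)) (Σ j, Fin (n j)) ℂ) :
    ∀ j, Matrix (Fin (n j)) (Fin (n j)) ℂ :=
  fun j => Matrix.of fun a b => Q ⟨j, a⟩ ⟨j, b⟩

lemma diagBlocks'_blockDiagonal' (Qb : ∀ j, Matrix (Fin (n j)) (Fin (n j)) ℂ) :
    diagBlocks' (Matrix.blockDiagonal' Qb) = Qb := by
  funext j
  ext a b
  exact Matrix.blockDiagonal'_apply_eq Qb j a b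

lemma blockEq' (S : ∀ j, Matrix (Fin (n j)) (Fin (n j)) ℂ)
    (Q : Matrix (Σ j, Fin (n j)) (Σ j, Fin (n j)) ℂ)
    (hcomm : Matrix.blockDiagonal' S * Q = Q * Matrix.blockDiagonal' S) (j l : Fin k) :
    S j * (Matrix.of fun a b => Q ⟨j, a⟩ ⟨l, b⟩) =
      (Matrix.of fun a b => Q ⟨j, a⟩ ⟨l, b⟩) * S l := by
  ext a b
  have h1 : (Matrix.blockDiagonal' S * Q) ⟨j, a⟩ ⟨l, b⟩ =
      (Q * Matrix.blockDiagonal' S) ⟨j, a⟩ ⟨l, b⟩ := by rw [hcomm]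
  have e1 : (Matrix.blockDiagonal' S * Q) ⟨j, a⟩ ⟨l, b⟩ =
      ∑ x : Fin (n j), S j a x * Q ⟨j, x⟩ ⟨l, b⟩ := by
    rw [Matrix.mul_apply, ← Finset.univ_sigma_univ, Finset.sum_sigma]
    rw [Finset.sum_eq_single j]
    · apply Finset.sum_congr rfl
      intro x _
      rw [Matrix.blockDiagonal'_apply_eq]
    · intro c _ hc
      apply Finset.sum_eq_zero
      intro x _
      rw [Matrix.blockDiagonal'_apply_ne _ _ _ (Ne.symm hc), zero_mul]
    · intro h; exact absurd (Finset.mem_univ j) h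
  have e2 : (Q * Matrix.blockDiagonal' S) ⟨j, a⟩ ⟨l, b⟩ =
      ∑ x : Fin (n l), Q ⟨j, a⟩ ⟨l, x⟩ * S l x b := by
    rw [Matrix.mul_apply, ← Finset.univ_sigma_univ, Finset.sum_sigma]
    rw [Finset.sum_eq_single l]
    · apply Finset.sum_congr rfl
      intro x _
      rw [Matrix.blockDiagonal'_apply_eq]
    · intro c _ hc
      apply Finset.sum_eq_zero
      intro x _
      rw [Matrix.blockDiagonal'_apply_ne _ _ _ hc, mul_zero]
    · intro h; exact absurd (Finset.mem_univ l) h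
  rw [Matrix.mul_apply, Matrix.mul_apply]
  simp only [Matrix.of_apply]
  rw [← e1, ← e2] at *
  exact h1

lemma keyDecomp (S : ∀ j, Matrix (Fin (n j)) (Fin (n j)) ℂ) (lam : Fin k → ℂ)
    (hdist : Function.Injective lam)
    (hspec : ∀ j, spectrum ℂ (S j) = {lam j})
    (Q : Matrix (Σ j, Fin (n j)) (Σ j, Fin (n j)) ℂ)
    (hQ1 : Qᵀ * Q = 1)
    (hQ2 : Qᵀ * Matrix.blockDiagonal' S * Q = Matrix.blockDiagonal' S) :
    Q = Matrix.blockDiagonal' (diagBlocks' Q) := by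
  have hQQ : Q * Qᵀ = 1 := mul_eq_one_comm.mp hQ1
  have hcomm : Matrix.blockDiagonal' S * Q = Q * Matrix.blockDiagonal' S := by
    calc Matrix.blockDiagonal' S * Q
        = (Q * Qᵀ) * Matrix.blockDiagonal' S * Q := by rw [hQQ, Matrix.one_mul]
      _ = Q * (Qᵀ * Matrix.blockDiagonal' S * Q) := by
          rw [Matrix.mul_assoc Q Qᵀ, Matrix.mul_assoc Q]
      _ = Q * Matrix.blockDiagonal' S := by rw [hQ2]
  ext ⟨j, a⟩ ⟨l, b⟩
  by_cases h : j = l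
  · subst h
    rw [Matrix.blockDiagonal'_apply_eq]
    rfl
  · rw [Matrix.blockDiagonal'_apply_ne _ _ _ h]
    have hz := sylvester' (S j) (S l) (lam j) (lam l) (fun he => h (hdist he))
      (hspec j) (hspec l) _ (blockEq' S Q hcomm j l)
    have := congrFun (congrFun hz a) b
    simpa using this

lemma convBlocks (S Qb : ∀ j, Matrix (Fin (n j)) (Fin (n j)) ℂ)
    (h : ∀ j, (Qb j)ᵀ * Qb j = 1 ∧ (Qb j)ᵀ * S j * Qb j = S j) :
    (Matrix.blockDiagonal' Qb)ᵀ * Matrix.blockDiagonal' Qb = 1 ∧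
      (Matrix.blockDiagonal' Qb)ᵀ * Matrix.blockDiagonal' S * Matrix.blockDiagonal' Qb =
        Matrix.blockDiagonal' S := by
  have ht : (Matrix.blockDiagonal' Qb)ᵀ = Matrix.blockDiagonal' (fun j => (Qb j)ᵀ) :=
    Matrix.blockDiagonal'_transpose Qb
  constructor
  · rw [ht, ← Matrix.blockDiagonal'_mul]
    have : (fun j => (Qb j)ᵀ * Qb j) = (1 : ∀ j, Matrix (Fin (n j)) (Fin (n j)) ℂ) :=
      funext fun j => (h j).1
    rw [this, Matrix.blockDiagonal'_one]
  · rw [ht, ← Matrix.blockDiagonal'_mul, ← Matrix.blockDiagonal'_mul]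
    exact congrArg _ (funext fun j => (h j).2)

end Aux

/-- If `S = S_1 ⊕ ⋯ ⊕ S_k` where each `S_j` has `λ_j` as its only
eigenvalue and the `λ_j` are pairwise distinct, then an orthogonal `Q` satisfies
`QᵀSQ = S` iff `Q = Q_1 ⊕ ⋯ ⊕ Q_k` with each `Q_j` orthogonal and `Q_jᵀ S_j Q_j = S_j`.
In particular, the isotropy group `Σ_S` is isomorphic to the direct product of the
isotropy groups `Σ_{S_j}`. -/
theorem stmt0 (k : ℕ) (n : Fin k → ℕ)
    (S : ∀ j, Matrix (Fin (n j)) (Fin (n j)) ℂ) (lam : Fin k → ℂ)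
    (hdist : Function.Injective lam)
    (hspec : ∀ j, spectrum ℂ (S j) = {lam j}) :
    (∀ Q : Matrix (Σ j, Fin (n j)) (Σ j, Fin (n j)) ℂ,
      (Qᵀ * Q = 1 ∧
          Qᵀ * Matrix.blockDiagonal' S * Q = Matrix.blockDiagonal' S) ↔
        ∃ Qb : ∀ j, Matrix (Fin (n j)) (Fin (n j)) ℂ,
          (∀ j, (Qb j)ᵀ * Qb j = 1 ∧ (Qb j)ᵀ * S j * Qb j = S j) ∧
            Q = Matrix.blockDiagonal' Qb) ∧
    ∃ f : Matrix (Σ j, Fin (n j)) (Σ j, Fin (n j)) ℂ →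
        (∀ j, Matrix (Fin (n j)) (Fin (n j)) ℂ),
      Set.BijOn f
        {Q | Qᵀ * Q = 1 ∧
          Qᵀ * Matrix.blockDiagonal' S * Q = Matrix.blockDiagonal' S}
        {Qb | ∀ j, (Qb j)ᵀ * Qb j = 1 ∧ (Qb j)ᵀ * S j * Qb j = S j} ∧
      ∀ Q₁ Q₂ : Matrix (Σ j, Fin (n j)) (Σ j, Fin (n j)) ℂ,
        (Q₁ᵀ * Q₁ = 1 ∧
          Q₁ᵀ * Matrix.blockDiagonal' S * Q₁ = Matrix.blockDiagonal' S) →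
        (Q₂ᵀ * Q₂ = 1 ∧
          Q₂ᵀ * Matrix.blockDiagonal' S * Q₂ = Matrix.blockDiagonal' S) →
        f (Q₁ * Q₂) = fun j => f Q₁ j * f Q₂ j := by
  have main : ∀ Q : Matrix (Σ j, Fin (n j)) (Σ j, Fin (n j)) ℂ,
      (Qᵀ * Q = 1 ∧ Qᵀ * Matrix.blockDiagonal' S * Q = Matrix.blockDiagonal' S) ↔
        ∃ Qb : ∀ j, Matrix (Fin (n j)) (Fin (n j)) ℂ,
          (∀ j, (Qb j)ᵀ * Qb j = 1 ∧ (Qb j)ᵀ * S j * Qb j = S j) ∧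
            Q = Matrix.blockDiagonal' Qb := by
    intro Q
    constructor
    · rintro ⟨h1, h2⟩
      have heq := keyDecomp S lam hdist hspec Q h1 h2
      refine ⟨diagBlocks' Q, fun j => ?_, heq⟩
      set Qb := diagBlocks' Q with hQbdef
      have ht : (Matrix.blockDiagonal' Qb)ᵀ = Matrix.blockDiagonal' (fun j => (Qb j)ᵀ) :=
        Matrix.blockDiagonal'_transpose Qb
      constructor
      · have hb : Matrix.blockDiagonal' (fun j => (Qb j)ᵀ * Qb j) =
            Matrix.blockDiagonal' (1 : ∀ j, Matrix (Fin (n j)) (Fin (n j)) ℂ) := by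
          rw [Matrix.blockDiagonal'_mul, ← ht, ← heq, h1, Matrix.blockDiagonal'_one]
        have := congrFun (congrArg diagBlocks' hb) j
        rwa [diagBlocks'_blockDiagonal', diagBlocks'_blockDiagonal'] at this
      · have hb : Matrix.blockDiagonal' (fun j => (Qb j)ᵀ * S j * Qb j) =
            Matrix.blockDiagonal' S := by
          have : (fun j => (Qb j)ᵀ * S j * Qb j) =
              fun j => ((fun i => (Qb i)ᵀ * S i) j) * Qb j := rfl
          rw [this, Matrix.blockDiagonal'_mul, Matrix.blockDiagonal'_mul, ← ht, ← heq, h2]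
        have := congrFun (congrArg diagBlocks' hb) j
        rwa [diagBlocks'_blockDiagonal', diagBlocks'_blockDiagonal'] at this
    · rintro ⟨Qb, hQb, rfl⟩
      exact convBlocks S Qb hQb
  refine ⟨main, diagBlocks', ⟨⟨?_, ?_, ?_⟩, ?_⟩⟩
  · intro Q hQ
    obtain ⟨Qb, hQb, rfl⟩ := (main Q).mp hQ
    rw [Set.mem_setOf_eq]
    rw [diagBlocks'_blockDiagonal']
    exact hQb
  · intro Q₁ h₁ Q₂ h₂ hf
    obtain ⟨Qb₁, _, rfl⟩ := (main Q₁).mp h₁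
    obtain ⟨Qb₂, _, rfl⟩ := (main Q₂).mp h₂
    rw [diagBlocks'_blockDiagonal', diagBlocks'_blockDiagonal'] at hf
    rw [hf]
  · intro Qb hQb
    refine ⟨Matrix.blockDiagonal' Qb, ?_, diagBlocks'_blockDiagonal' Qb⟩
    exact (main _).mpr ⟨Qb, hQb, rfl⟩
  · intro Q₁ Q₂ h₁ h₂
    obtain ⟨Qb₁, _, rfl⟩ := (main Q₁).mp h₁
    obtain ⟨Qb₂, _, rfl⟩ := (main Q₂).mp h₂
    rw [← Matrix.blockDiagonal'_mul]
    funext j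
    rw [diagBlocks'_blockDiagonal', diagBlocks'_blockDiagonal', diagBlocks'_blockDiagonal']
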